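/- The S lex-cel with a particular precedence on unanimity R^SLUN satisfies neutrality (NT), concatenation consistency (CCON), and independence of the decomposition of the worst sets (IDWS), but does not satisfy all indifference all winners (AIAW). -/

import Mathlib

namespace SocRank

/-- A coalitional ranking (a weak order on a set of feasible nonempty coalitions),
represented by its list of equivalence classes, listed from best to worst. -/
structure CoalRanking (X : Type*) where
  classes : List (Finset (Finset X))
  class_nonempty : ∀ C ∈ classes, C.Nonempty
  coal_nonempty : ∀ C ∈ classes, ∀ S ∈ C, S.Nonempty
  classes_disjoint : classes.Pairwise Disjoint

namespace CoalRanking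

variable {X : Type*}

/-- The coalition domain `𝒟(≿)` of a coalitional ranking. -/
def domain [DecidableEq X] (r : CoalRanking X) : Finset (Finset X) :=
  r.classes.foldr (· ∪ ·) ∅

/-- The list of equivalence classes of the restriction of a ranking to a set `D`
of coalitions. -/
def restrictClasses [DecidableEq X] (r : CoalRanking X) (D : Finset (Finset X)) :
    List (Finset (Finset X)) :=
  (r.classes.map (· ∩ D)).filter (fun C => decide C.Nonempty)

/-- Merging two lists of equivalence classes by aligning them at the top. -/
def zipUnion [DecidableEq X] :
    List (Finset (Finset X)) → List (Finset (Finset X)) → List (Finset (Finset X))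
  | [], M => M
  | L, [] => L
  | A :: L, B :: M => (A ∪ B) :: zipUnion L M

/-- `r` is a sum of the disjoint rankings `r₁` and `r₂`: its domain is the union of
the two domains and its restriction to the domain of `rᵢ` is `rᵢ`. -/
def IsSum [DecidableEq X] (r r₁ r₂ : CoalRanking X) : Prop :=
  Disjoint r₁.domain r₂.domain ∧
  r.domain = r₁.domain ∪ r₂.domain ∧
  r.restrictClasses r₁.domain = r₁.classes ∧
  r.restrictClasses r₂.domain = r₂.classes

/-- `r` is the concatenation sum `r₁ · r₂` of the disjoint rankings `r₁` and `r₂`. -/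
def IsConcatSum [DecidableEq X] (r r₁ r₂ : CoalRanking X) : Prop :=
  Disjoint r₁.domain r₂.domain ∧ r.classes = r₁.classes ++ r₂.classes

/-- `r` is the top-aligned sum `r₁ ⊨ r₂` of the disjoint rankings `r₁` and `r₂`. -/
def IsTopAlignedSum [DecidableEq X] (r r₁ r₂ : CoalRanking X) : Prop :=
  Disjoint r₁.domain r₂.domain ∧ r.classes = zipUnion r₁.classes r₂.classes

/-- `r` is the bottom-aligned sum `r₁ ⫤ r₂` of the disjoint rankings `r₁` and `r₂`. -/
def IsBottomAlignedSum [DecidableEq X] (r r₁ r₂ : CoalRanking X) : Prop :=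
  Disjoint r₁.domain r₂.domain ∧
  r.classes = (zipUnion r₁.classes.reverse r₂.classes.reverse).reverse

/-- Renaming the individuals of a coalitional ranking by a permutation `σ` of `X`:
the ranking `≿^σ`. -/
def mapPerm [DecidableEq X] (σ : Equiv.Perm X) (r : CoalRanking X) : CoalRanking X where
  classes := r.classes.map (fun C => C.image (fun S => S.image σ))
  class_nonempty := by
    intro C hC
    simp only [List.mem_map] at hC
    obtain ⟨C₀, hC₀, rfl⟩ := hC
    exact (r.class_nonempty C₀ hC₀).image _
  coal_nonempty := by
    intro C hC S hS
    simp only [List.mem_map] at hC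
    obtain ⟨C₀, hC₀, rfl⟩ := hC
    simp only [Finset.mem_image] at hS
    obtain ⟨S₀, hS₀, rfl⟩ := hS
    exact (r.coal_nonempty C₀ hC₀ S₀ hS₀).image _
  classes_disjoint := by
    refine List.Pairwise.map _ (fun {A B} h => ?_) r.classes_disjoint
    exact (Finset.disjoint_image
      (Finset.image_injective σ.injective)).mpr h

/-- Renaming the coalitions of a coalitional ranking by a permutation `π` of the set of
coalitions (mapping nonempty sets to nonempty sets): the ranking `≿_π`. -/
def mapCoalPerm [DecidableEq X] (π : Equiv.Perm (Finset X))
    (hπ : ∀ S : Finset X, S.Nonempty → (π S).Nonempty) (r : CoalRanking X) :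
    CoalRanking X where
  classes := r.classes.map (fun C => C.image π)
  class_nonempty := by
    intro C hC
    simp only [List.mem_map] at hC
    obtain ⟨C₀, hC₀, rfl⟩ := hC
    exact (r.class_nonempty C₀ hC₀).image _
  coal_nonempty := by
    intro C hC S hS
    simp only [List.mem_map] at hC
    obtain ⟨C₀, hC₀, rfl⟩ := hC
    simp only [Finset.mem_image] at hS
    obtain ⟨S₀, hS₀, rfl⟩ := hS
    exact hπ S₀ (r.coal_nonempty C₀ hC₀ S₀ hS₀)
  classes_disjoint := by
    refine List.Pairwise.map _ (fun {A B} h => ?_) r.classes_disjoint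
    exact (Finset.disjoint_image π.injective).mpr h

end CoalRanking

open CoalRanking

variable {X : Type*}

/-- A social ranking solution: a map assigning to every coalitional ranking a binary
relation on the individuals. -/
abbrev SRSMap (X : Type*) := CoalRanking X → X → X → Prop

/-- The symmetric part `I` of the social ranking. -/
def Ind (R : SRSMap X) (r : CoalRanking X) (x y : X) : Prop := R r x y ∧ R r y x

/-- The asymmetric part `P` of the social ranking. -/
def Pref (R : SRSMap X) (r : CoalRanking X) (x y : X) : Prop := R r x y ∧ ¬ R r y x

/-- Conditions (1)-(4) of consistency for the triple `(r₁, r₂, r)`. -/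
def ConsistentAt (R : SRSMap X) (r₁ r₂ r : CoalRanking X) : Prop :=
  ∀ x y : X,
    (Ind R r₁ x y → Ind R r₂ x y → Ind R r x y) ∧
    (Ind R r₁ x y → Pref R r₂ x y → Pref R r x y) ∧
    (Pref R r₁ x y → Ind R r₂ x y → Pref R r x y) ∧
    (Pref R r₁ x y → Pref R r₂ x y → Pref R r x y)

/-- Consistency (CON). -/
def CON [DecidableEq X] (R : SRSMap X) : Prop :=
  ∀ r₁ r₂ r : CoalRanking X, IsSum r r₁ r₂ → ConsistentAt R r₁ r₂ r

/-- Concatenation consistency (CCON). -/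
def CCON [DecidableEq X] (R : SRSMap X) : Prop :=
  ∀ r₁ r₂ r : CoalRanking X, IsConcatSum r r₁ r₂ → ConsistentAt R r₁ r₂ r

/-- Top-aligned consistency (TCON). -/
def TCON [DecidableEq X] (R : SRSMap X) : Prop :=
  ∀ r₁ r₂ r : CoalRanking X, IsTopAlignedSum r r₁ r₂ → ConsistentAt R r₁ r₂ r

/-- Bottom-aligned consistency (BCON). -/
def BCON [DecidableEq X] (R : SRSMap X) : Prop :=
  ∀ r₁ r₂ r : CoalRanking X, IsBottomAlignedSum r r₁ r₂ → ConsistentAt R r₁ r₂ r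

/-- II-concatenation consistency. -/
def IICCON [DecidableEq X] (R : SRSMap X) : Prop :=
  ∀ r₁ r₂ r : CoalRanking X, IsConcatSum r r₁ r₂ →
    ∀ x y : X, Ind R r₁ x y → Ind R r₂ x y → Ind R r x y

/-- IP-concatenation consistency. -/
def IPCCON [DecidableEq X] (R : SRSMap X) : Prop :=
  ∀ r₁ r₂ r : CoalRanking X, IsConcatSum r r₁ r₂ →
    ∀ x y : X, Ind R r₁ x y → Pref R r₂ x y → Pref R r x y

/-- PI-concatenation consistency. -/
def PICCON [DecidableEq X] (R : SRSMap X) : Prop :=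
  ∀ r₁ r₂ r : CoalRanking X, IsConcatSum r r₁ r₂ →
    ∀ x y : X, Pref R r₁ x y → Ind R r₂ x y → Pref R r x y

/-- PP-concatenation consistency. -/
def PPCCON [DecidableEq X] (R : SRSMap X) : Prop :=
  ∀ r₁ r₂ r : CoalRanking X, IsConcatSum r r₁ r₂ →
    ∀ x y : X, Pref R r₁ x y → Pref R r₂ x y → Pref R r x y

/-- `x_k`: the number of coalitions of the class `C` containing `x`. -/
def cnt [DecidableEq X] (x : X) (C : Finset (Finset X)) : ℕ :=
  (C.filter (fun S => x ∈ S)).card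

/-- The vector `θ_≿(x) = (x₁, …, x_l)`. -/
def theta [DecidableEq X] (r : CoalRanking X) (x : X) : List ℕ :=
  r.classes.map (cnt x)

/-- `sign`: `1` on positive numbers, `0` otherwise. -/
def sgn (n : ℕ) : ℕ := if 0 < n then 1 else 0

/-- The vector `θ̇_≿(x) = (sign(x₁), …, sign(x_l))`. -/
def thetaDot [DecidableEq X] (r : CoalRanking X) (x : X) : List ℕ :=
  (theta r x).map sgn

/-- The lexicographic order `≥^L` on vectors (of equal length). -/
def lexGE : List ℕ → List ℕ → Prop
  | _, [] => True
  | [], _ :: _ => False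
  | a :: as, b :: bs => b < a ∨ (a = b ∧ lexGE as bs)

/-- The lexicographic excellence solution (lex-cel) `R^L`. -/
def lexcel [DecidableEq X] : SRSMap X := fun r x y => lexGE (theta r x) (theta r y)

/-- The sign lexicographic excellence solution (S lex-cel) `R^{SL}`. -/
def slexcel [DecidableEq X] : SRSMap X := fun r x y => lexGE (thetaDot r x) (thetaDot r y)

/-- The plurality solution `R^P`. -/
def plurality [DecidableEq X] : SRSMap X := fun r x y =>
  (theta r y).headD 0 ≤ (theta r x).headD 0

/-- The sign plurality solution `R^{SP}`. -/
def splurality [DecidableEq X] : SRSMap X := fun r x y =>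
  sgn ((theta r y).headD 0) ≤ sgn ((theta r x).headD 0)

/-- The anti-plurality solution `R^{AP}`. -/
def antiplurality [DecidableEq X] : SRSMap X := fun r x y =>
  (theta r x).getLastD 0 ≤ (theta r y).getLastD 0

/-- `e_≿(x)`: the largest `k` such that `x` belongs to every coalition of each of the
first `k` equivalence classes. -/
def eIIS [DecidableEq X] (r : CoalRanking X) (x : X) : ℕ :=
  (r.classes.takeWhile (fun C => decide (∀ S ∈ C, x ∈ S))).length

/-- The intersection initial segment solution (IIS) `R^{IIS}`. -/
def iis [DecidableEq X] : SRSMap X := fun r x y => eIIS r y ≤ eIIS r x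

/-- The index of the equivalence class a coalition belongs to. -/
def classIdx [DecidableEq X] (r : CoalRanking X) (S : Finset X) : ℕ :=
  r.classes.findIdx (fun C => decide (S ∈ C))

/-- `C_{xy}`: the number of CP comparisons in favour of `x` against `y`. -/
def cpCount [DecidableEq X] [Fintype X] (r : CoalRanking X) (x y : X) : ℕ :=
  ((Finset.univ : Finset (Finset X)).filter (fun S =>
    S.Nonempty ∧ x ∉ S ∧ y ∉ S ∧ insert x S ∈ r.domain ∧ insert y S ∈ r.domain ∧
    classIdx r (insert x S) < classIdx r (insert y S))).card

/-- The Ceteris Paribus majority solution `R^{CPM}`. -/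
def cpm [DecidableEq X] [Fintype X] : SRSMap X := fun r x y =>
  cpCount r y x ≤ cpCount r x y

/-- Neutrality (NT). -/
def NT [DecidableEq X] (R : SRSMap X) : Prop :=
  ∀ (σ : Equiv.Perm X) (r : CoalRanking X) (x y : X),
    R (r.mapPerm σ) (σ x) (σ y) ↔ R r x y

/-- Weak coalitional anonymity (WCA). -/
def WCA [DecidableEq X] (R : SRSMap X) : Prop :=
  ∀ (x y : X) (π : Equiv.Perm (Finset X))
    (hπ : ∀ S : Finset X, S.Nonempty → (π S).Nonempty),
    (∀ S : Finset X, x ∈ S → x ∈ π S) → (∀ S : Finset X, y ∈ S → y ∈ π S) →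
    ∀ r : CoalRanking X,
      (R (r.mapCoalPerm π hπ) x y ↔ R r x y) ∧ (R (r.mapCoalPerm π hπ) y x ↔ R r y x)

/-- The weak union very important person property (WUVIP). -/
def WUVIP (R : SRSMap X) : Prop :=
  ∀ (r : CoalRanking X) (A B : Finset (Finset X)), r.classes = [A, B] →
    ∀ x y : X, (∃ S ∈ A, x ∈ S) → (∀ S ∈ A, y ∉ S) → Pref R r x y

/-- All indifference all winners (AIAW). -/
def AIAW [DecidableEq X] (R : SRSMap X) : Prop :=
  ∀ r : CoalRanking X, r.classes.length ≤ 1 →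
    (∀ x y : X, (∃ S ∈ r.domain, x ∈ S) → (∃ S ∈ r.domain, y ∈ S) → Ind R r x y) ∧
    (∀ x z : X, (∃ S ∈ r.domain, x ∈ S) → (∀ S ∈ r.domain, z ∉ S) → Pref R r x z)

/-- Independence of the decomposition of the worst sets (IDWS). -/
def IDWS [DecidableEq X] (R : SRSMap X) : Prop :=
  ∀ (r r' : CoalRanking X) (L G : List (Finset (Finset X))) (W : Finset (Finset X)),
    L ≠ [] → r.classes = L ++ [W] → r'.classes = L ++ G →
    G.foldr (· ∪ ·) ∅ = W →
    ∀ x y : X, Pref R r x y → Pref R r' x y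

/-- Independence of the addition of the worst sets (IAWS). -/
def IAWS [DecidableEq X] (R : SRSMap X) : Prop :=
  ∀ (r r' : CoalRanking X) (G : Finset (Finset X)),
    r'.classes = r.classes ++ [G] → (∀ S ∈ G, S ∉ r.domain) →
    ∀ x y : X, Pref R r x y → Pref R r' x y

/-- Tops-only (TO). -/
def TO (R : SRSMap X) : Prop :=
  ∀ (r r' : CoalRanking X) (A : Finset (Finset X)),
    r.classes.head? = some A → r'.classes.head? = some A → R r = R r'

/-- The dual S lex-cel `R^{DSL}`. -/
def dslexcel [DecidableEq X] : SRSMap X := fun r x y =>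
  lexGE ((thetaDot r y).reverse) ((thetaDot r x).reverse)

/-- The inverse dual S lex-cel `R^{IDSL}`. -/
def idslexcel [DecidableEq X] : SRSMap X := fun r x y => dslexcel r y x

/-- The vector `θ̃_≿(x)` used by the S lex-cel with precedence on unanimity. -/
def tildeTheta [DecidableEq X] (r : CoalRanking X) (x : X) : List ℕ :=
  r.classes.map (fun C => if cnt x C = C.card then 2 else if 0 < cnt x C then 1 else 0)

/-- The S lex-cel with a particular precedence on unanimity `R^{SLUN}`. -/
def slun [DecidableEq X] : SRSMap X := fun r x y =>
  lexGE (tildeTheta r x) (tildeTheta r y)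

/-- The S sum score `Σ_k sign(x_k)`. -/
def ssum [DecidableEq X] (r : CoalRanking X) (x : X) : ℕ := (thetaDot r x).sum

/-- The S sum rule with tie-breaking by S lex-cel `R^{SSUM,SL}`. -/
def ssumSL [DecidableEq X] : SRSMap X := fun r x y =>
  ssum r y < ssum r x ∨ (ssum r x = ssum r y ∧ slexcel r x y)

end SocRank

open SocRank

namespace SLUNAux

/-- Strict lexicographic order. -/
def SL (a b : List ℕ) : Prop := lexGE a b ∧ ¬ lexGE b a

theorem lexGE_refl : ∀ a : List ℕ, lexGE a a
  | [] => trivial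
  | _ :: as => Or.inr ⟨rfl, lexGE_refl as⟩

theorem lexGE_antisymm : ∀ {a b : List ℕ}, lexGE a b → lexGE b a → a = b
  | [], [], _, _ => rfl
  | [], _ :: _, h, _ => absurd h (by simp [lexGE])
  | _ :: _, [], _, h => absurd h (by simp [lexGE])
  | x :: as, y :: bs, h1, h2 => by
    rcases h1 with h1 | ⟨rfl, h1⟩
    · rcases h2 with h2 | ⟨h2, _⟩ <;> omega
    · rcases h2 with h2 | ⟨_, h2⟩
      · omega
      · rw [lexGE_antisymm h1 h2]

theorem lexGE_append : ∀ (c a b : List ℕ), lexGE (c ++ a) (c ++ b) ↔ lexGE a b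
  | [], a, b => Iff.rfl
  | x :: c, a, b => by
    simpa [lexGE, List.cons_append] using lexGE_append c a b

theorem SL_append_left {a b : List ℕ} (c : List ℕ) (h : SL a b) :
    SL (c ++ a) (c ++ b) := by
  exact ⟨(lexGE_append c a b).mpr h.1, fun hc => h.2 ((lexGE_append c b a).mp hc)⟩

theorem SL_append : ∀ {a b : List ℕ}, SL a b → a.length = b.length →
    ∀ c d : List ℕ, SL (a ++ c) (b ++ d)
  | [], [], h, _, _, _ => absurd h.2 (by simp [SL, lexGE])
  | x :: as, y :: bs, h, hl, c, d => by
    rcases h.1 with h1 | ⟨rfl, h1⟩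
    · refine ⟨Or.inl h1, fun hc => ?_⟩
      rcases hc with hc | ⟨hc, _⟩ <;> omega
    · have h2 : ¬ lexGE bs as := fun hc => h.2 (Or.inr ⟨rfl, hc⟩)
      have := SL_append ⟨h1, h2⟩ (by simpa using hl) c d
      exact ⟨Or.inr ⟨rfl, this.1⟩, fun hc => by
        rcases hc with hc | ⟨_, hc⟩
        · omega
        · exact this.2 hc⟩

theorem SL_split : ∀ {p q : List ℕ}, p.length = q.length → ∀ {s t : List ℕ},
    SL (p ++ s) (q ++ t) → SL p q ∨ (p = q ∧ SL s t)
  | [], [], _, s, t, h => Or.inr ⟨rfl, h⟩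
  | x :: p', y :: q', hl, s, t, h => by
    rcases h.1 with h1 | ⟨rfl, h1⟩
    · refine Or.inl ⟨Or.inl h1, fun hc => ?_⟩
      rcases hc with hc | ⟨hc, _⟩ <;> omega
    · have h2 : ¬ lexGE (q' ++ t) (p' ++ s) := fun hc => h.2 (Or.inr ⟨rfl, hc⟩)
      rcases SL_split (by simpa using hl) ⟨h1, h2⟩ with hpq | ⟨rfl, hst⟩
      · refine Or.inl ⟨Or.inr ⟨rfl, hpq.1⟩, fun hc => ?_⟩
        rcases hc with hc | ⟨_, hc⟩
        · omega
        · exact hpq.2 hc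
      · exact Or.inr ⟨rfl, hst⟩

theorem SL_of_zero : ∀ {a b : List ℕ}, a.length = b.length →
    (∀ v ∈ b, v = 0) → (∃ v ∈ a, 0 < v) → SL a b
  | [], [], _, _, ha => by simp at ha
  | x :: as, y :: bs, hl, hb, ha => by
    have hy : y = 0 := hb y (by simp)
    by_cases hx : 0 < x
    · exact ⟨Or.inl (by omega), fun hc => by
        rcases hc with hc | ⟨hc, _⟩ <;> omega⟩
    · have hx0 : x = 0 := by omega
      have ha' : ∃ v ∈ as, 0 < v := by
        rcases ha with ⟨v, hv, hv0⟩
        rcases List.mem_cons.mp hv with rfl | hv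
        · omega
        · exact ⟨v, hv, hv0⟩
      have := SL_of_zero (by simpa using hl) (fun v hv => hb v (by simp [hv])) ha'
      exact ⟨Or.inr ⟨by omega, this.1⟩, fun hc => by
        rcases hc with hc | ⟨_, hc⟩
        · omega
        · exact this.2 hc⟩

theorem SL_of_two : ∀ {a b : List ℕ}, a.length = b.length →
    (∀ v ∈ a, v = 2) → (∀ v ∈ b, v ≤ 2) → (∃ v ∈ b, v < 2) → SL a b
  | [], [], _, _, _, hw => by simp at hw
  | x :: as, y :: bs, hl, ha, hb, hw => by
    have hx : x = 2 := ha x (by simp)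
    have hy : y ≤ 2 := hb y (by simp)
    by_cases hy2 : y < 2
    · exact ⟨Or.inl (by omega), fun hc => by
        rcases hc with hc | ⟨hc, _⟩ <;> omega⟩
    · have hw' : ∃ v ∈ bs, v < 2 := by
        rcases hw with ⟨v, hv, hv2⟩
        rcases List.mem_cons.mp hv with rfl | hv
        · omega
        · exact ⟨v, hv, hv2⟩
      have := SL_of_two (by simpa using hl) (fun v hv => ha v (by simp [hv]))
        (fun v hv => hb v (by simp [hv])) hw'
      exact ⟨Or.inr ⟨by omega, this.1⟩, fun hc => by
        rcases hc with hc | ⟨_, hc⟩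
        · omega
        · exact this.2 hc⟩

variable {X : Type*} [DecidableEq X]

/-- The tilde value of an individual on a single class. -/
def tval (x : X) (C : Finset (Finset X)) : ℕ :=
  if cnt x C = C.card then 2 else if 0 < cnt x C then 1 else 0

theorem tildeTheta_eq (r : CoalRanking X) (x : X) :
    tildeTheta r x = r.classes.map (tval x) := rfl

theorem tildeTheta_length (r : CoalRanking X) (x : X) :
    (tildeTheta r x).length = r.classes.length := by
  simp [tildeTheta_eq]

theorem cnt_eq_zero {z : X} {C : Finset (Finset X)} :
    cnt z C = 0 ↔ ∀ S ∈ C, z ∉ S := by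
  simp [cnt, Finset.card_eq_zero, Finset.filter_eq_empty_iff]

theorem cnt_pos {z : X} {C : Finset (Finset X)} :
    0 < cnt z C ↔ ∃ S ∈ C, z ∈ S := by
  simp [cnt, Finset.card_pos, Finset.filter_nonempty_iff]

theorem cnt_eq_card {z : X} {C : Finset (Finset X)} :
    cnt z C = C.card ↔ ∀ S ∈ C, z ∈ S := by
  constructor
  · intro h
    have := Finset.eq_of_subset_of_card_le (Finset.filter_subset _ C) h.ge
    intro S hS
    have : S ∈ C.filter (fun S => z ∈ S) := by rw [this]; exact hS
    exact (Finset.mem_filter.mp this).2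
  · intro h
    unfold cnt
    rw [Finset.filter_eq_self.mpr h]

theorem tval_le_two (x : X) (C : Finset (Finset X)) : tval x C ≤ 2 := by
  unfold tval; split <;> [omega; (split <;> omega)]

theorem tval_eq_two {x : X} {C : Finset (Finset X)} (h : ∀ S ∈ C, x ∈ S) :
    tval x C = 2 := by
  unfold tval; rw [if_pos (cnt_eq_card.mpr h)]

theorem tval_eq_zero {x : X} {C : Finset (Finset X)} (hC : C.Nonempty)
    (h : ∀ S ∈ C, x ∉ S) : tval x C = 0 := by
  have h0 : cnt x C = 0 := cnt_eq_zero.mpr h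
  unfold tval
  rw [if_neg (by have := Finset.card_pos.mpr hC; omega), if_neg (by omega)]

theorem tval_pos {x : X} {C : Finset (Finset X)} (h : ∃ S ∈ C, x ∈ S) :
    0 < tval x C := by
  have := cnt_pos.mpr h
  unfold tval
  split_ifs <;> omega

theorem tval_lt_two {x : X} {C : Finset (Finset X)} (h : ∃ S ∈ C, x ∉ S) :
    tval x C < 2 := by
  rcases h with ⟨S, hS, hx⟩
  have : cnt x C ≠ C.card := fun hc => hx (cnt_eq_card.mp hc S hS)
  unfold tval
  rw [if_neg this]; split <;> omega

theorem mem_foldr_union {α : Type*} [DecidableEq α] {G : List (Finset α)} {S : α} :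
    S ∈ G.foldr (· ∪ ·) ∅ ↔ ∃ Γ ∈ G, S ∈ Γ := by
  induction G with
  | nil => simp
  | cons Γ G ih => simp [ih]

/-- `Ind` for slun is equality of tilde vectors. -/
theorem ind_iff {r : CoalRanking X} {x y : X} :
    Ind (slun : SRSMap X) r x y ↔ tildeTheta r x = tildeTheta r y := by
  constructor
  · intro h; exact lexGE_antisymm h.1 h.2
  · intro h
    unfold Ind slun
    rw [h]
    exact ⟨lexGE_refl _, lexGE_refl _⟩

theorem pref_iff {r : CoalRanking X} {x y : X} :
    Pref (slun : SRSMap X) r x y ↔ SL (tildeTheta r x) (tildeTheta r y) := Iff.rfl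

end SLUNAux

open SLUNAux

/-- the S lex-cel with precedence on unanimity satisfies NT, CCON
and IDWS, but does not satisfy AIAW. -/
theorem slun_axioms {X : Type*} [DecidableEq X] [Fintype X]
    (hX : 3 ≤ Fintype.card X) :
    NT (slun : SRSMap X) ∧ CCON (slun : SRSMap X) ∧ IDWS (slun : SRSMap X) ∧
      ¬ AIAW (slun : SRSMap X) := by
  refine ⟨?_, ?_, ?_, ?_⟩
  · -- NT
    intro σ r x y
    have him : Function.Injective (fun S : Finset X => S.image σ) :=
      Finset.image_injective σ.injective
    have hcnt : ∀ (z : X) (C : Finset (Finset X)),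
        cnt (σ z) (C.image (fun S => S.image σ)) = cnt z C := by
      intro z C
      unfold cnt
      rw [Finset.filter_image, Finset.card_image_of_injective _ him]
      congr 1
      apply Finset.filter_congr
      intro S _
      simp [σ.injective.eq_iff]
    have hz : ∀ z : X, tildeTheta (r.mapPerm σ) (σ z) = tildeTheta r z := by
      intro z
      simp only [tildeTheta_eq, CoalRanking.mapPerm, List.map_map]
      apply List.map_congr_left
      intro C _
      simp only [Function.comp]
      unfold tval
      rw [hcnt, Finset.card_image_of_injective _ him]
    simp only [slun, hz]
  · -- CCON
    rintro r₁ r₂ r ⟨hdisj, hcat⟩ x y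
    have hx : tildeTheta r x = tildeTheta r₁ x ++ tildeTheta r₂ x := by
      simp [tildeTheta_eq, hcat]
    have hy : tildeTheta r y = tildeTheta r₁ y ++ tildeTheta r₂ y := by
      simp [tildeTheta_eq, hcat]
    refine ⟨?_, ?_, ?_, ?_⟩
    · intro h1 h2
      rw [ind_iff, hx, hy, ind_iff.mp h1, ind_iff.mp h2]
    · intro h1 h2
      rw [pref_iff, hx, hy, ind_iff.mp h1]
      exact SL_append_left _ (pref_iff.mp h2)
    · intro h1 h2
      rw [pref_iff, hx, hy, ind_iff.mp h2]
      exact SL_append (pref_iff.mp h1) (by simp [tildeTheta_length]) _ _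
    · intro h1 _
      rw [pref_iff, hx, hy]
      exact SL_append (pref_iff.mp h1) (by simp [tildeTheta_length]) _ _
  · -- IDWS
    intro r r' L G W _ hr hr' hG x y hp
    rw [pref_iff] at hp ⊢
    have hx : tildeTheta r x = L.map (tval x) ++ [tval x W] := by
      simp [tildeTheta_eq, hr]
    have hy : tildeTheta r y = L.map (tval y) ++ [tval y W] := by
      simp [tildeTheta_eq, hr]
    have hx' : tildeTheta r' x = L.map (tval x) ++ G.map (tval x) := by
      simp [tildeTheta_eq, hr']
    have hy' : tildeTheta r' y = L.map (tval y) ++ G.map (tval y) := by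
      simp [tildeTheta_eq, hr']
    rw [hx, hy] at hp
    rw [hx', hy']
    rcases SL_split (by simp) hp with hL | ⟨hLeq, hW⟩
    · exact SL_append hL (by simp) _ _
    · rw [hLeq]
      apply SL_append_left
      have hlt : tval y W < tval x W := by
        have h1 := hW.1
        have h2 := hW.2
        simp only [lexGE, and_true, not_or] at h1 h2
        omega
      have hWmem : W ∈ r.classes := by rw [hr]; simp
      have hWne : W.Nonempty := r.class_nonempty W hWmem
      have hGne : ∀ Γ ∈ G, Γ.Nonempty := fun Γ hΓ =>
        r'.class_nonempty Γ (by rw [hr']; simp [hΓ])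
      have hGsub : ∀ Γ ∈ G, ∀ S ∈ Γ, S ∈ W := fun Γ hΓ S hS =>
        hG ▸ mem_foldr_union.mpr ⟨Γ, hΓ, hS⟩
      have hWG : ∀ S ∈ W, ∃ Γ ∈ G, S ∈ Γ := fun S hS => mem_foldr_union.mp (hG ▸ hS)
      by_cases hy0 : ∀ S ∈ W, y ∉ S
      · apply SL_of_zero (by simp)
        · intro v hv
          simp only [List.mem_map] at hv
          obtain ⟨Γ, hΓ, rfl⟩ := hv
          exact tval_eq_zero (hGne Γ hΓ) (fun S hS => hy0 S (hGsub Γ hΓ S hS))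
        · have hpos : 0 < tval x W := by omega
          have hx0 : ∃ S ∈ W, x ∈ S := by
            by_contra hc
            push_neg at hc
            rw [tval_eq_zero hWne hc] at hpos
            omega
          obtain ⟨S, hS, hxS⟩ := hx0
          obtain ⟨Γ, hΓ, hSΓ⟩ := hWG S hS
          exact ⟨tval x Γ, List.mem_map_of_mem (f := tval x) hΓ, tval_pos ⟨S, hSΓ, hxS⟩⟩
      · push_neg at hy0
        have hyv : 0 < tval y W := tval_pos hy0
        have hxv : tval x W = 2 := by
          have := tval_le_two x W
          omega
        have hxall : ∀ S ∈ W, x ∈ S := by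
          by_contra hc
          push_neg at hc
          have := tval_lt_two (x := x) (C := W) hc
          omega
        have hysome : ∃ S ∈ W, y ∉ S := by
          by_contra hc
          push_neg at hc
          rw [tval_eq_two hc] at hlt
          omega
        apply SL_of_two (by simp)
        · intro v hv
          simp only [List.mem_map] at hv
          obtain ⟨Γ, hΓ, rfl⟩ := hv
          exact tval_eq_two (fun S hS => hxall S (hGsub Γ hΓ S hS))
        · intro v hv
          simp only [List.mem_map] at hv
          obtain ⟨Γ, hΓ, rfl⟩ := hv
          exact tval_le_two _ _
        · obtain ⟨S, hS, hyS⟩ := hysome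
          obtain ⟨Γ, hΓ, hSΓ⟩ := hWG S hS
          exact ⟨tval y Γ, List.mem_map_of_mem (f := tval y) hΓ, tval_lt_two ⟨S, hSΓ, hyS⟩⟩
  · -- ¬ AIAW
    intro h
    have h1 : 1 < Fintype.card X := by omega
    obtain ⟨x, y, hxy⟩ := Fintype.exists_pair_of_one_lt_card h1
    set C : Finset (Finset X) := {{x, y}, {x}} with hCdef
    have hSC : ({x, y} : Finset X) ∈ C := by simp [hCdef]
    have hTC : ({x} : Finset X) ∈ C := by simp [hCdef]
    let r : CoalRanking X := {
      classes := [C]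
      class_nonempty := by
        intro D hD
        simp only [List.mem_singleton] at hD
        subst hD
        exact ⟨{x}, hTC⟩
      coal_nonempty := by
        intro D hD U hU
        simp only [List.mem_singleton] at hD
        subst hD
        simp only [hCdef, Finset.mem_insert, Finset.mem_singleton] at hU
        rcases hU with rfl | rfl
        · exact ⟨x, by simp⟩
        · exact ⟨x, by simp⟩
      classes_disjoint := by simp }
    have hcl : r.classes = [C] := rfl
    have hdom : r.domain = C := by
      simp [CoalRanking.domain, hcl]
    have hind := (h r (by rw [hcl]; simp)).1 x y
        ⟨{x, y}, by rw [hdom]; exact hSC, by simp⟩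
        ⟨{x, y}, by rw [hdom]; exact hSC, by simp⟩
    have heq : [tval x C] = [tval y C] := by
      have := ind_iff.mp hind
      simpa [tildeTheta_eq, hcl] using this
    have hx2 : tval x C = 2 := tval_eq_two (by
      intro U hU
      simp only [hCdef, Finset.mem_insert, Finset.mem_singleton] at hU
      rcases hU with rfl | rfl <;> simp)
    have hy2 : tval y C < 2 := tval_lt_two ⟨{x}, hTC, by
      simp only [Finset.mem_singleton]
      exact Ne.symm hxy⟩
    simp only [List.cons.injEq] at heq
    omega
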